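/- Let A be an additive category with products and split idempotents, possessing a product generator G (every object of A is a direct factor of a product of copies of G). Let S = {G[n] : n ∈ ℤ} in K(A). Then every bounded complex over A with at most n+1 nonzero entries lies in Prdₙ(S). -/

import Mathlib

open CategoryTheory CategoryTheory.Limits CategoryTheory.Pretriangulated

universe v u

namespace Statement12

section Defs

variable (K : Type u) [Category.{v} K] [Preadditive K] [HasZeroObject K]
  [HasShift K ℤ] [∀ n : ℤ, (shiftFunctor K n).Additive] [Pretriangulated K]

/-- `Prod S`: the class of direct factors of products of objects of `S`. -/
def prodClosure (S : Set K) : Set K :=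
  {X | ∃ (J : Type v) (f : J → K) (_ : ∀ j, f j ∈ S) (P : K) (π : ∀ j, P ⟶ f j)
      (_ : Nonempty (IsLimit (Fan.mk P π))) (s : X ⟶ P) (r : P ⟶ X), s ≫ r = 𝟙 X}

/-- `Prd₀(S) = Prod S`, and `Prdₙ₊₁(S)` consists of the objects `Y` fitting in a
distinguished triangle `X ⟶ Y ⟶ Z ⟶ X⟦1⟧` with `X ∈ Prd₀(S)` and `Z ∈ Prdₙ(S)`. -/
def Prd (S : Set K) : ℕ → Set K
  | 0 => prodClosure K S
  | (n + 1) => {Y | ∃ (X Z : K) (f : X ⟶ Y) (g : Y ⟶ Z) (h : Z ⟶ X⟦(1 : ℤ)⟧),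
      (Triangle.mk f g h ∈ distTriang K) ∧ X ∈ prodClosure K S ∧ Z ∈ Prd S n}

end Defs


section Fans

variable {C : Type*} [Category C]

noncomputable def isLimitFanOfIsZero {J : Type*} {F : J → C} (P : C) (p : ∀ j, P ⟶ F j)
    (hP : IsZero P) (hF : ∀ j, IsZero (F j)) : IsLimit (Fan.mk P p) :=
  mkFanLimit _ (fun s => hP.from_ s.pt) (fun s j => (hF j).eq_of_tgt _ _)
    (fun s m _ => hP.eq_of_tgt _ _)

noncomputable def isLimitFanOfIso {J : Type*} {F G : J → C} {P Q : C}
    (p : ∀ j, P ⟶ F j) (hp : IsLimit (Fan.mk P p)) (e : Q ≅ P) (ej : ∀ j, F j ≅ G j)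
    (q : ∀ j, Q ⟶ G j) (hq : ∀ j, q j = e.hom ≫ p j ≫ (ej j).hom) :
    IsLimit (Fan.mk Q q) := by
  refine mkFanLimit _
    (fun s => hp.lift (Fan.mk s.pt fun j => s.proj j ≫ (ej j).inv) ≫ e.inv) ?_ ?_
  · intro s j
    have h := hp.fac (Fan.mk s.pt fun j => s.proj j ≫ (ej j).inv) ⟨j⟩
    simp only [Fan.proj, Fan.mk_pt, Fan.mk_π_app] at h
    simp only [Fan.proj, Fan.mk_π_app, hq, Category.assoc, Iso.inv_hom_id_assoc]
    rw [← Category.assoc, h]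
    simp
  · intro s m hm
    have h2 : m ≫ e.hom = hp.lift (Fan.mk s.pt fun j => s.proj j ≫ (ej j).inv) := by
      refine hp.hom_ext ?_
      rintro ⟨j⟩
      have h := hp.fac (Fan.mk s.pt fun j => s.proj j ≫ (ej j).inv) ⟨j⟩
      simp only [Fan.proj, Fan.mk_pt, Fan.mk_π_app] at h ⊢
      rw [Category.assoc, h]
      have h3 := hm j
      simp only [Fan.proj, Fan.mk_π_app] at h3
      rw [← h3, hq j]
      simp
    rw [← h2]
    simp

end Fans

section Products

variable {A : Type u} [Category.{v} A] [Preadditive A]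

local notation "Q" => HomotopyCategory.quotient A (ComplexShape.up ℤ)

/-- A degreewise product fan of cochain complexes descends to a product fan in the
homotopy category. -/
noncomputable def isLimitQuotientFan {J : Type*} (F : J → CochainComplex A ℤ)
    (P : CochainComplex A ℤ) (π : ∀ j, P ⟶ F j)
    (hi : ∀ i : ℤ, IsLimit (Fan.mk (P.X i) fun j => (π j).f i)) :
    IsLimit (Fan.mk ((Q).obj P) (fun j => (Q).map (π j))) := by
  classical
  -- choice of chain-level representatives of the legs of a cone
  let g : ∀ (s : Fan fun j => (Q).obj (F j)) (j : J), (s.pt.as : CochainComplex A ℤ) ⟶ F j :=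
    fun s j => ((Q).map_surjective (s.proj j)).choose
  have hg : ∀ s j, (Q).map (g s j) = s.proj j :=
    fun s j => ((Q).map_surjective (s.proj j)).choose_spec
  -- the chain-level lift
  let ℓ : ∀ (s : Fan fun j => (Q).obj (F j)), (s.pt.as : CochainComplex A ℤ) ⟶ P := fun s =>
    { f := fun i => (hi i).lift (Fan.mk (s.pt.as.X i) fun j => (g s j).f i)
      comm' := by
        intro i i' _
        refine (hi i').hom_ext ?_
        rintro ⟨j⟩
        have fac : ∀ (k : ℤ), (hi k).lift (Fan.mk (s.pt.as.X k) fun j => (g s j).f k) ≫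
            (π j).f k = (g s j).f k := fun k => by
          have h := (hi k).fac (Fan.mk (s.pt.as.X k) fun j => (g s j).f k) ⟨j⟩
          simpa [Fan.proj] using h
        simp only [Fan.mk_pt, Fan.mk_π_app, Category.assoc]
        rw [← (π j).comm i i', ← Category.assoc, fac i, (g s j).comm i i', fac i'] }
  have hℓ : ∀ (s : Fan fun j => (Q).obj (F j)) (j : J) (k : ℤ),
      (ℓ s).f k ≫ (π j).f k = (g s j).f k := by
    intro s j k
    have h := (hi k).fac (Fan.mk (s.pt.as.X k) fun j => (g s j).f k) ⟨j⟩
    simpa [Fan.proj] using h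
  refine mkFanLimit _ (fun s => (Q).map (ℓ s)) ?_ ?_
  · intro s j
    simp only [Fan.proj, Fan.mk_π_app]
    refine ((Q).map_comp (ℓ s) (π j)).symm.trans ?_
    rw [show ℓ s ≫ π j = g s j from HomologicalComplex.hom_ext _ _ (fun k => hℓ s j k)]
    exact hg s j
  · intro s m hm
    obtain ⟨m', hm'⟩ := (Q).map_surjective m
    rw [← hm']
    refine HomotopyCategory.eq_of_homotopy _ _ ?_
    -- homotopies between the representatives of the legs
    have H : ∀ j, Homotopy (m' ≫ π j) (g s j) := fun j =>
      HomotopyCategory.homotopyOfEq _ _ (by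
        rw [Functor.map_comp, hm', hg]
        have := hm j
        exact this)
    exact
      { hom := fun i i' => (hi i').lift (Fan.mk (s.pt.as.X i) fun j => (H j).hom i i')
        zero := by
          intro i i' hii'
          refine (hi i').hom_ext ?_
          rintro ⟨j⟩
          have h := (hi i').fac (Fan.mk (s.pt.as.X i) fun j => (H j).hom i i') ⟨j⟩
          simp only [Fan.proj, Fan.mk_pt, Fan.mk_π_app] at h ⊢
          rw [h, (H j).zero i i' hii', zero_comp]
        comm := by
          intro i
          refine (hi i).hom_ext ?_
          rintro ⟨j⟩
          have fjoin : ∀ (k i' : ℤ),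
              (hi i').lift (Fan.mk (s.pt.as.X k) fun j => (H j).hom k i') ≫ (π j).f i' =
                (H j).hom k i' := by
            intro k i'
            have h := (hi i').fac (Fan.mk (s.pt.as.X k) fun j => (H j).hom k i') ⟨j⟩
            simpa [Fan.proj] using h
          simp only [Fan.proj, Fan.mk_pt, Fan.mk_π_app, Preadditive.add_comp]
          rw [dNext_eq _ (show (ComplexShape.up ℤ).Rel i (i + 1) by simp),
            prevD_eq _ (show (ComplexShape.up ℤ).Rel (i - 1) i by simp)]
          have hc := (H j).comm i
          rw [dNext_eq _ (show (ComplexShape.up ℤ).Rel i (i + 1) by simp),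
            prevD_eq _ (show (ComplexShape.up ℤ).Rel (i - 1) i by simp)] at hc
          calc m'.f i ≫ (π j).f i
              = (m' ≫ π j).f i := rfl
            _ = _ := by
                rw [hc]
                congr 1
                · congr 1
                  · rw [Category.assoc, fjoin (i+1) i]
                  · rw [Category.assoc, ← (π j).comm (i-1) i, ← Category.assoc, fjoin i (i-1)]
                · exact (hℓ s j i).symm }

end Products

section PC

variable (K : Type u) [Category.{v} K] [Preadditive K] [HasZeroObject K]
  [HasShift K ℤ] [∀ n : ℤ, (shiftFunctor K n).Additive] [Pretriangulated K]

lemma prodClosure_of_iso (S : Set K) {X Y : K} (e : X ≅ Y) (h : Y ∈ prodClosure K S) :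
    X ∈ prodClosure K S := by
  obtain ⟨J, f, hf, P, π, hlim, s, r, hsr⟩ := h
  exact ⟨J, f, hf, P, π, hlim, e.hom ≫ s, r ≫ e.inv, by
    rw [Category.assoc, ← Category.assoc s r, hsr, Category.id_comp, e.hom_inv_id]⟩

end PC

section Single

variable {A : Type u} [Category.{v} A] [Preadditive A] [HasZeroObject A]
  [HasBinaryBiproducts A] [HasProducts.{v} A]

local notation "Q" => HomotopyCategory.quotient A (ComplexShape.up ℤ)
local notation "KA" => HomotopyCategory A (ComplexShape.up ℤ)

lemma single_mem_prodClosure (G : A)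
    (hG : ∀ X : A, ∃ (J : Type v) (s : X ⟶ ∏ᶜ fun _ : J => G) (r : (∏ᶜ fun _ : J => G) ⟶ X),
      s ≫ r = 𝟙 X)
    (S : Set KA)
    (hS : S = Set.range (fun n : ℤ =>
      ((Q).obj ((HomologicalComplex.single A (ComplexShape.up ℤ) 0).obj G))⟦n⟧))
    (m : ℤ) (B : A) :
    (Q).obj ((HomologicalComplex.single A (ComplexShape.up ℤ) m).obj B) ∈
      prodClosure KA S := by
  obtain ⟨J, sB, rB, hsr⟩ := hG B
  let e : ((Q).obj ((HomologicalComplex.single A (ComplexShape.up ℤ) m).obj G)) ≅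
      ((Q).obj ((HomologicalComplex.single A (ComplexShape.up ℤ) 0).obj G))⟦(-m : ℤ)⟧ :=
    ((HomotopyCategory.singleFunctors A).shiftIso (-m) m 0 (by omega)).symm.app G
  -- the degreewise fans
  have hdeg : ∀ i : ℤ, IsLimit (Fan.mk
      (((HomologicalComplex.single A (ComplexShape.up ℤ) m).obj (∏ᶜ fun _ : J => G)).X i)
      (fun j => ((HomologicalComplex.single A (ComplexShape.up ℤ) m).map
        (Pi.π (fun _ : J => G) j)).f i)) := by
    intro i
    by_cases hi : i = m
    · subst hi
      exact isLimitFanOfIso (Pi.π (fun _ : J => G)) (productIsProduct _)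
        (HomologicalComplex.singleObjXSelf (ComplexShape.up ℤ) i (∏ᶜ fun _ : J => G))
        (fun _ => (HomologicalComplex.singleObjXSelf (ComplexShape.up ℤ) i G).symm)
        _ (fun j => HomologicalComplex.single_map_f_self _ _ _)
    · exact isLimitFanOfIsZero _ _
        (HomologicalComplex.isZero_single_obj_X (ComplexShape.up ℤ) m _ i hi)
        (fun _ => HomologicalComplex.isZero_single_obj_X (ComplexShape.up ℤ) m _ i hi)
  refine ⟨J, fun _ => ((Q).obj
      ((HomologicalComplex.single A (ComplexShape.up ℤ) 0).obj G))⟦(-m : ℤ)⟧,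
    fun _ => by rw [hS]; exact ⟨-m, rfl⟩,
    (Q).obj ((HomologicalComplex.single A (ComplexShape.up ℤ) m).obj (∏ᶜ fun _ : J => G)),
    fun j => (Q).map ((HomologicalComplex.single A (ComplexShape.up ℤ) m).map
      (Pi.π (fun _ : J => G) j)) ≫ e.hom,
    ⟨?_⟩,
    (Q).map ((HomologicalComplex.single A (ComplexShape.up ℤ) m).map sB),
    (Q).map ((HomologicalComplex.single A (ComplexShape.up ℤ) m).map rB), ?_⟩
  · exact isLimitFanOfIso _
      (isLimitQuotientFan _ _ _ hdeg) (Iso.refl _) (fun _ => e) _ (fun j => by simp)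
  · rw [← Functor.map_comp, ← Functor.map_comp, hsr, CategoryTheory.Functor.map_id, CategoryTheory.Functor.map_id]

end Single

section Erase

variable {A : Type u} [Category.{v} A] [Preadditive A] [HasZeroObject A]

open ZeroObject HomologicalComplex

/-- The complex `X` with its degree `m` entry replaced by `0`. -/
noncomputable def eraseX (X : CochainComplex A ℤ) (m : ℤ) : CochainComplex A ℤ where
  X i := if i = m then 0 else X.X i
  d i j := if h : ¬ i = m ∧ ¬ j = m then
      eqToHom (if_neg h.1) ≫ X.d i j ≫ eqToHom (if_neg h.2).symm else 0
  shape i j hij := by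
    rw [X.shape i j hij]
    simp
  d_comp_d' i j k _ _ := by
    by_cases hi : i = m <;> by_cases hj : j = m <;> by_cases hk : k = m <;>
      simp [hi, hj, hk]

lemma isZero_eraseX_self (X : CochainComplex A ℤ) (m : ℤ) :
    IsZero ((eraseX X m).X m) := by
  dsimp [eraseX]
  rw [if_pos rfl]
  exact isZero_zero A

lemma isZero_eraseX (X : CochainComplex A ℤ) (m i : ℤ) (h : i ≠ m → IsZero (X.X i)) :
    IsZero ((eraseX X m).X i) := by
  by_cases hi : i = m
  · subst hi; exact isZero_eraseX_self X i
  · exact (h hi).of_iso (eqToIso (by simp [eraseX, hi]))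

/-- The projection of `X` onto `eraseX X m`; a chain map when `X.d m _ = 0`. -/
noncomputable def eraseXπ (X : CochainComplex A ℤ) (m : ℤ) (hd : ∀ j, X.d m j = 0) :
    X ⟶ eraseX X m where
  f i := if h : i = m then 0 else eqToHom (if_neg h).symm
  comm' i j hij := by
    by_cases hj : j = m
    · subst hj; exact (isZero_eraseX_self X j).eq_of_tgt _ _
    by_cases hi : i = m
    · subst hi; simp [eraseX, hj, hd]; exact zero_comp
    · simp [eraseX, hi, hj]

/-- The inclusion of the degree `m` part of `X`. -/
noncomputable def singleι (X : CochainComplex A ℤ) (m : ℤ) (hd : ∀ j, X.d m j = 0) :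
    (single A (ComplexShape.up ℤ) m).obj (X.X m) ⟶ X :=
  mkHomFromSingle (𝟙 (X.X m)) (fun i _ => by rw [hd]; simp)

/-- The degreewise split short exact sequence peeling off the degree `m` part of `X`. -/
noncomputable def eraseSC (X : CochainComplex A ℤ) (m : ℤ) (hd : ∀ j, X.d m j = 0) :
    ShortComplex (CochainComplex A ℤ) :=
  ShortComplex.mk (singleι X m hd) (eraseXπ X m hd) (by
    refine HomologicalComplex.hom_ext _ _ (fun i => ?_)
    by_cases hi : i = m
    · subst hi
      simp [eraseXπ]
    · exact (isZero_single_obj_X (ComplexShape.up ℤ) m (X.X m) i hi).eq_of_src _ _)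

noncomputable def eraseSplitting (X : CochainComplex A ℤ) (m : ℤ) (hd : ∀ j, X.d m j = 0)
    (i : ℤ) : ((eraseSC X m hd).map (HomologicalComplex.eval A (ComplexShape.up ℤ) i)).Splitting :=
  if hi : i = m then by
    subst hi
    exact
      { r := (singleObjXSelf (ComplexShape.up ℤ) i (X.X i)).inv
        s := 0
        f_r := by
          change (singleι X i hd).f i ≫ _ = 𝟙 _
          dsimp [singleι]
          rw [mkHomFromSingle_f]
          simp
        s_g := (isZero_eraseX_self X i).eq_of_src _ _
        id := by
          change (singleObjXSelf (ComplexShape.up ℤ) i (X.X i)).inv ≫ (singleι X i hd).f i +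
            (eraseXπ X i hd).f i ≫ (0 : (eraseX X i).X i ⟶ X.X i) = 𝟙 (X.X i)
          dsimp [singleι]
          rw [mkHomFromSingle_f]
          simp [eraseXπ] }
  else
    { r := 0
      s := eqToHom (by simp [eraseSC, eraseX, hi])
      f_r := (isZero_single_obj_X (ComplexShape.up ℤ) m (X.X m) i hi).eq_of_src _ _
      s_g := by
        change eqToHom _ ≫ (eraseXπ X m hd).f i = 𝟙 ((eraseX X m).X i)
        simp [eraseXπ, hi]
        exact (eqToHom_trans _ _).trans (eqToHom_refl _ _)
      id := by
        change (0 : X.X i ⟶ ((single A (ComplexShape.up ℤ) m).obj (X.X m)).X i) ≫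
          (singleι X m hd).f i + (eraseXπ X m hd).f i ≫
          (eqToHom (by simp [eraseX, hi]) : (eraseX X m).X i ⟶ X.X i) = 𝟙 (X.X i)
        simp [eraseXπ, hi]
        exact (eqToHom_trans _ _).trans (eqToHom_refl _ _) }

end Erase

section Main

variable {A : Type u} [Category.{v} A] [Preadditive A] [HasZeroObject A]
  [HasBinaryBiproducts A] [HasProducts.{v} A]

open HomologicalComplex

local notation "Q" => HomotopyCategory.quotient A (ComplexShape.up ℤ)
local notation "KA" => HomotopyCategory A (ComplexShape.up ℤ)

/-- A complex concentrated in one degree is isomorphic to a single complex. -/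
noncomputable def isoSingleOfConcentrated (X : CochainComplex A ℤ) (m : ℤ)
    (hm : ∀ i, i ≠ m → IsZero (X.X i)) :
    X ≅ (single A (ComplexShape.up ℤ) m).obj (X.X m) where
  hom := mkHomToSingle (𝟙 (X.X m)) (fun i hi => by
    rw [(hm i (by simp only [ComplexShape.up_Rel] at hi; omega)).eq_of_src (X.d i m) 0]
    simp)
  inv := mkHomFromSingle (𝟙 (X.X m)) (fun i hi => by
    rw [(hm i (by simp only [ComplexShape.up_Rel] at hi; omega)).eq_of_tgt (X.d m i) 0]
    simp)
  hom_inv_id := by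
    refine HomologicalComplex.hom_ext _ _ (fun i => ?_)
    by_cases hi : i = m
    · subst hi
      simp [mkHomToSingle_f, mkHomFromSingle_f]
    · exact (hm i hi).eq_of_src _ _
  inv_hom_id := by
    refine HomologicalComplex.hom_ext _ _ (fun i => ?_)
    by_cases hi : i = m
    · subst hi
      simp [mkHomToSingle_f, mkHomFromSingle_f]
    · exact (isZero_single_obj_X (ComplexShape.up ℤ) m (X.X m) i hi).eq_of_src _ _

lemma mem_Prd_aux (G : A)
    (hG : ∀ X : A, ∃ (J : Type v) (s : X ⟶ ∏ᶜ fun _ : J => G) (r : (∏ᶜ fun _ : J => G) ⟶ X),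
      s ≫ r = 𝟙 X)
    (S : Set KA)
    (hS : S = Set.range (fun n : ℤ =>
      ((Q).obj ((HomologicalComplex.single A (ComplexShape.up ℤ) 0).obj G))⟦n⟧)) :
    ∀ (n : ℕ) (X : CochainComplex A ℤ) (s : Finset ℤ), s.card ≤ n + 1 →
      (∀ i ∉ s, IsZero (X.X i)) → (Q).obj X ∈ Prd KA S n := by
  intro n
  induction n with
  | zero =>
    intro X s hcard hz
    have : ∃ m : ℤ, ∀ i, i ≠ m → IsZero (X.X i) := by
      rcases s.eq_empty_or_nonempty with h | h
      · exact ⟨0, fun i _ => hz i (by simp [h])⟩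
      · obtain ⟨a, ha⟩ := Finset.card_eq_one.1 (le_antisymm hcard h.card_pos)
        exact ⟨a, fun i hi => hz i (by simp [ha, hi])⟩
    obtain ⟨m, hm⟩ := this
    exact prodClosure_of_iso KA S ((Q).mapIso (isoSingleOfConcentrated X m hm))
      (single_mem_prodClosure G hG S hS m (X.X m))
  | succ n ih =>
    intro X s hcard hz
    obtain ⟨t, ht1, ht2, hne⟩ : ∃ t : Finset ℤ, t.card ≤ n + 2 ∧
        (∀ i ∉ t, IsZero (X.X i)) ∧ t.Nonempty := by
      rcases s.eq_empty_or_nonempty with h | h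
      · exact ⟨{0}, by simp, fun i _ => hz i (by simp [h]), by simp⟩
      · exact ⟨s, hcard, hz, h⟩
    set m := t.max' hne with hm
    have hd : ∀ j, X.d m j = 0 := by
      intro j
      by_cases hrel : (ComplexShape.up ℤ).Rel m j
      · refine (ht2 j (fun hj => ?_)).eq_of_tgt _ _
        have := t.le_max' j hj
        simp only [ComplexShape.up_Rel] at hrel
        omega
      · exact X.shape m j hrel
    have hmem : m ∈ t := t.max'_mem hne
    have dist := (HomotopyCategory.distinguished_iff_iso_trianglehOfDegreewiseSplit
      (CochainComplex.trianglehOfDegreewiseSplit (eraseSC X m hd) (eraseSplitting X m hd))).2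
      ⟨eraseSC X m hd, eraseSplitting X m hd, ⟨Iso.refl _⟩⟩
    refine ⟨(Q).obj ((single A (ComplexShape.up ℤ) m).obj (X.X m)), (Q).obj (eraseX X m),
      (CochainComplex.trianglehOfDegreewiseSplit (eraseSC X m hd) (eraseSplitting X m hd)).mor₁,
      (CochainComplex.trianglehOfDegreewiseSplit (eraseSC X m hd) (eraseSplitting X m hd)).mor₂,
      (CochainComplex.trianglehOfDegreewiseSplit (eraseSC X m hd) (eraseSplitting X m hd)).mor₃,
      dist, single_mem_prodClosure G hG S hS m (X.X m), ?_⟩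
    refine ih (eraseX X m) (t.erase m) ?_ ?_
    · have := Finset.card_erase_of_mem hmem
      omega
    · intro i hi
      refine isZero_eraseX X m i (fun him => ?_)
      exact ht2 i (fun hit => hi (Finset.mem_erase.2 ⟨him, hit⟩))

end Main


/-- Let `A` be an additive category with products and split idempotents,
possessing a product generator `G`, and let `S = {G[n] : n ∈ ℤ}` in `K(A)`. Then every
bounded complex over `A` with at most `n + 1` nonzero entries lies in `Prdₙ(S)`. -/
theorem statement12 (A : Type u) [Category.{v} A] [Preadditive A] [HasZeroObject A]
    [HasBinaryBiproducts A] [HasProducts.{v} A] [IsIdempotentComplete A]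
    (G : A)
    (hG : ∀ X : A, ∃ (J : Type v) (s : X ⟶ ∏ᶜ fun _ : J => G) (r : (∏ᶜ fun _ : J => G) ⟶ X),
      s ≫ r = 𝟙 X)
    (S : Set (HomotopyCategory A (ComplexShape.up ℤ)))
    (hS : S = Set.range (fun n : ℤ =>
      ((HomotopyCategory.quotient A (ComplexShape.up ℤ)).obj
        ((HomologicalComplex.single A (ComplexShape.up ℤ) 0).obj G))⟦n⟧))
    (n : ℕ) (X : CochainComplex A ℤ)
    (hX : ∃ s : Finset ℤ, s.card ≤ n + 1 ∧ ∀ i ∉ s, IsZero (X.X i)) :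
    (HomotopyCategory.quotient A (ComplexShape.up ℤ)).obj X ∈
      Prd (HomotopyCategory A (ComplexShape.up ℤ)) S n := by
  obtain ⟨s, h1, h2⟩ := hX
  exact mem_Prd_aux G hG S hS n X s h1 h2

end Statement12
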